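/- Let (x₀,ω₀) ∈ G × S be such that y₀ := x₀ − t(x₀,ω₀)ω₀ is a regular (C¹) point of ∂G and ω₀·ν(y₀) < 0. Then the escape time t is continuously differentiable on a neighbourhood of (x₀,ω₀) in G × S, one has lim_{(x,ω)→(y₀,ω₀), (x,ω)∈G×S} t(x,ω) = 0, and ω₀·(∇_x t)(x₀,ω₀) = 1. -/

import Mathlib

open MeasureTheory Metric Set Filter
open scoped ENNReal RealInnerProductSpace Topology

set_option maxHeartbeats 1000000

noncomputable section

/-- Euclidean three-space ℝ³. -/
abbrev E3 : Type := EuclideanSpace ℝ (Fin 3)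

/-- The unit sphere `S ⊂ ℝ³`. -/
def sphS : Set E3 := Metric.sphere (0 : E3) 1

/-- The escape time `t(x,ω) = inf {s > 0 : x − sω ∉ G}`. -/
def escTime (G : Set E3) (x ω : E3) : ℝ := sInf {s : ℝ | 0 < s ∧ x - s • ω ∉ G}

variable {E : Type*} [NormedAddCommGroup E] [NormedSpace ℝ E]

/-- A triangular continuous linear equivalence `(p, a) ↦ (p, B (p, a))` when `B (0,1) ≠ 0`. -/
def triEquiv (B : (E × ℝ) →L[ℝ] ℝ) (hc : B (0,1) ≠ 0) : (E × ℝ) ≃L[ℝ] (E × ℝ) :=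
  { toFun := fun z => (z.1, B z)
    invFun := fun w => (w.1, (w.2 - B (w.1, 0)) / B (0,1))
    map_add' := fun z w => by simp [Prod.ext_iff]
    map_smul' := fun c z => by
      refine Prod.ext (by simp) ?_
      simp only [RingHom.id_apply]
      rw [show ((c • z : E × ℝ)) = c • z from rfl, _root_.map_smul]
      rfl
    left_inv := fun z => by
      have h : (z.1, z.2) = (z.1, (0:ℝ)) + (z.2 • ((0:E),(1:ℝ))) := by
        simp [Prod.ext_iff]
      refine Prod.ext rfl ?_
      simp only
      rw [show (B z : ℝ) = B (z.1, z.2) from rfl]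
      rw [h, map_add, _root_.map_smul]
      field_simp
      rw [smul_eq_mul]; ring
    right_inv := fun w => by
      refine Prod.ext rfl ?_
      simp only
      have h : ((w.1 : E), (w.2 - B (w.1, 0)) / B (0,1)) =
          (w.1, (0:ℝ)) + (((w.2 - B (w.1, 0)) / B (0,1)) • ((0:E),(1:ℝ))) := by
        simp [Prod.ext_iff]
      rw [h, map_add, _root_.map_smul]
      simp [smul_eq_mul, hc]
    continuous_toFun := (continuous_fst.prodMk B.continuous)
    continuous_invFun := by
      refine continuous_fst.prodMk ?_
      exact ((continuous_snd.sub (B.continuous.comp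
        (continuous_fst.prodMk continuous_const))).div_const _) }

@[simp] lemma triEquiv_apply (B : (E × ℝ) →L[ℝ] ℝ) (hc : B (0,1) ≠ 0) (z : E × ℝ) :
    triEquiv B hc z = (z.1, B z) := rfl

/-- Main identification lemma: near a transversal boundary crossing the escape time
coincides (on `G`) with a `C¹` implicit function. -/
theorem main_ident (G : Set E3) (hG : IsOpen G)
    (U : Set E3) (hU : IsOpen U) (f : E3 → ℝ) (hf : ContDiffOn ℝ 1 f U)
    (hloc : ∀ z ∈ U, (z ∈ G ↔ f z < 0))
    (x₁ ω₁ : E3) (t₁ : ℝ) (ht₁ : 0 ≤ t₁)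
    (hyU : x₁ - t₁ • ω₁ ∈ U) (hf0 : f (x₁ - t₁ • ω₁) = 0)
    (hseg : ∀ s ∈ Ico (0:ℝ) t₁, x₁ - s • ω₁ ∈ G)
    (htr : fderiv ℝ f (x₁ - t₁ • ω₁) ω₁ < 0) :
    ∃ τ : E3 × E3 → ℝ, ContDiffAt ℝ 1 τ (x₁, ω₁) ∧ τ (x₁, ω₁) = t₁ ∧
      ∀ᶠ p in 𝓝 (x₁, ω₁), p.1 ∈ G → escTime G p.1 p.2 = τ p := by
  set y₁ : E3 := x₁ - t₁ • ω₁ with hy₁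
  set a₁ : (E3 × E3) × ℝ := ((x₁, ω₁), t₁) with ha₁
  -- the map `m (p,s) = p.1 - s • p.2`
  set m : (E3 × E3) × ℝ → E3 := fun z => z.1.1 - z.2 • z.1.2 with hm
  have hmC : ContDiff ℝ 1 m :=
    (contDiff_fst.comp contDiff_fst).sub (contDiff_snd.smul (contDiff_snd.comp contDiff_fst))
  have hfc : ContDiffAt ℝ 1 f y₁ := hf.contDiffAt (hU.mem_nhds hyU)
  have hfy : HasFDerivAt f (fderiv ℝ f y₁) y₁ := (hfc.differentiableAt one_ne_zero).hasFDerivAt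
  -- derivative of `m`
  have h1 : HasFDerivAt (fun z : (E3 × E3) × ℝ => z.1.1)
      ((ContinuousLinearMap.fst ℝ E3 E3).comp (ContinuousLinearMap.fst ℝ (E3 × E3) ℝ)) a₁ :=
    (hasFDerivAt_fst).comp a₁ (hasFDerivAt_fst)
  have h2 : HasFDerivAt (fun z : (E3 × E3) × ℝ => z.2 • z.1.2)
      (t₁ • ((ContinuousLinearMap.snd ℝ E3 E3).comp (ContinuousLinearMap.fst ℝ (E3 × E3) ℝ)) +
        (ContinuousLinearMap.snd ℝ (E3 × E3) ℝ).smulRight ω₁) a₁ :=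
    HasFDerivAt.smul (c := fun z : (E3 × E3) × ℝ => z.2) (f := fun z : (E3 × E3) × ℝ => z.1.2)
      (hasFDerivAt_snd) ((hasFDerivAt_snd).comp a₁ (hasFDerivAt_fst))
  have hM : HasFDerivAt m
      (((ContinuousLinearMap.fst ℝ E3 E3).comp (ContinuousLinearMap.fst ℝ (E3 × E3) ℝ)) -
        (t₁ • ((ContinuousLinearMap.snd ℝ E3 E3).comp (ContinuousLinearMap.fst ℝ (E3 × E3) ℝ)) +
          (ContinuousLinearMap.snd ℝ (E3 × E3) ℝ).smulRight ω₁)) a₁ := h1.sub h2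
  set M := (((ContinuousLinearMap.fst ℝ E3 E3).comp (ContinuousLinearMap.fst ℝ (E3 × E3) ℝ)) -
        (t₁ • ((ContinuousLinearMap.snd ℝ E3 E3).comp (ContinuousLinearMap.fst ℝ (E3 × E3) ℝ)) +
          (ContinuousLinearMap.snd ℝ (E3 × E3) ℝ).smulRight ω₁)) with hMdef
  set B := (fderiv ℝ f y₁).comp M with hB
  have hg : HasFDerivAt (fun z => f (m z)) B a₁ := hfy.comp a₁ hM
  have hBval : B ((0 : E3 × E3), (1:ℝ)) = -(fderiv ℝ f y₁ ω₁) := by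
    simp [hB, hMdef, ContinuousLinearMap.sub_apply, ContinuousLinearMap.smulRight_apply]
  have hcne : B ((0 : E3 × E3), (1:ℝ)) ≠ 0 := by rw [hBval]; exact ne_of_gt (by linarith)
  set e := triEquiv B hcne with he
  set Φ : (E3 × E3) × ℝ → (E3 × E3) × ℝ := fun z => (z.1, f (m z)) with hΦ
  have hΦd : HasFDerivAt Φ (e : ((E3 × E3) × ℝ) →L[ℝ] ((E3 × E3) × ℝ)) a₁ := by
    have h := (hasFDerivAt_fst (𝕜 := ℝ) (p := a₁)).prodMk hg
    exact h
  have hΦc : ContDiffAt ℝ 1 Φ a₁ :=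
    contDiffAt_fst.prodMk (hfc.comp a₁ hmC.contDiffAt)
  set ψ := hΦc.localInverse hΦd one_ne_zero with hψ
  have hS := hΦc.hasStrictFDerivAt' hΦd one_ne_zero
  have hψc : ContDiffAt ℝ 1 ψ (Φ a₁) := hΦc.to_localInverse hΦd one_ne_zero
  have hψa : ψ (Φ a₁) = a₁ := hΦc.localInverse_apply_image hΦd one_ne_zero
  have hright : ∀ᶠ z in 𝓝 (Φ a₁), Φ (ψ z) = z := hS.eventually_right_inverse
  have key : Φ a₁ = ((x₁, ω₁), (0:ℝ)) := by
    simp only [hΦ]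
    refine Prod.ext rfl ?_
    simpa [hm] using hf0
  set τ : E3 × E3 → ℝ := fun p => (ψ (p, (0:ℝ))).2 with hτ
  have hpair : ContDiffAt ℝ 1 (fun p : E3 × E3 => ((p, (0:ℝ)) : (E3 × E3) × ℝ)) (x₁, ω₁) :=
    contDiffAt_id.prodMk contDiffAt_const
  have hψc' : ContDiffAt ℝ 1 ψ ((x₁, ω₁), (0:ℝ)) := key ▸ hψc
  have hτc : ContDiffAt ℝ 1 τ (x₁, ω₁) :=
    ContDiffAt.comp (x₁, ω₁) contDiffAt_snd (ContDiffAt.comp (x₁, ω₁) hψc' hpair)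
  have hτ₁ : τ (x₁, ω₁) = t₁ := by
    have : ψ ((x₁, ω₁), (0:ℝ)) = a₁ := key ▸ hψa
    simp [hτ, this, ha₁]
  have hmap : Tendsto (fun p : E3 × E3 => ((p, (0:ℝ)) : (E3 × E3) × ℝ)) (𝓝 (x₁, ω₁))
      (𝓝 (Φ a₁)) := by
    rw [key]
    exact Continuous.tendsto (continuous_id.prodMk continuous_const) _
  have hev : ∀ᶠ p in 𝓝 (x₁, ω₁), Φ (ψ (p, (0:ℝ))) = (p, (0:ℝ)) := hmap.eventually hright
  -- continuity of the derivative
  have hfder : ContinuousOn (fderiv ℝ f) U := hf.continuousOn_fderiv_of_isOpen hU le_rfl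
  set W' : Set (E3 × E3) := {q | q.1 ∈ U ∧ fderiv ℝ f q.1 q.2 < 0} with hW'
  have hW'open : IsOpen W' := by
    have hcont : ContinuousOn (fun q : E3 × E3 => fderiv ℝ f q.1 q.2) (U ×ˢ (univ : Set E3)) := by
      apply ContinuousOn.clm_apply
      · exact hfder.comp continuous_fst.continuousOn (fun q hq => hq.1)
      · exact continuous_snd.continuousOn
    have := hcont.isOpen_inter_preimage (t := Iio (0:ℝ)) (hU.prod isOpen_univ) isOpen_Iio
    convert this using 1
    ext q
    simp [hW', mem_prod]
  set W : Set ((E3 × E3) × ℝ) :=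
    (fun z : (E3 × E3) × ℝ => ((z.1.1 - z.2 • z.1.2 : E3), z.1.2)) ⁻¹' W' with hW
  have hWopen : IsOpen W := by
    apply hW'open.preimage
    exact ((continuous_fst.comp continuous_fst).sub
      (continuous_snd.smul (continuous_snd.comp continuous_fst))).prodMk
      (continuous_snd.comp continuous_fst)
  have ha₁W : a₁ ∈ W := ⟨hyU, htr⟩
  obtain ⟨ε, hε, hball⟩ : ∃ ε > 0, ball a₁ ε ⊆ W := by
    rcases Metric.isOpen_iff.1 hWopen a₁ ha₁W with ⟨ε, hε, h⟩
    exact ⟨ε, hε, h⟩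
  set δ : ℝ := ε / 2 with hδdef
  have hδ : 0 < δ := by positivity
  have hδε : δ < ε := by simp [hδdef]; linarith
  -- segment compactness
  set K : Set E3 := (fun s : ℝ => x₁ - s • ω₁) '' Icc 0 (t₁ - δ) with hK
  have hKcomp : IsCompact K := (isCompact_Icc).image (continuous_const.sub (continuous_id.smul continuous_const))
  have hKG : K ⊆ G := by
    rintro _ ⟨s, hs, rfl⟩
    exact hseg s ⟨hs.1, by linarith [hs.2]⟩
  obtain ⟨r, hr, hrG⟩ := hKcomp.exists_thickening_subset_open hG hKG
  set η : ℝ := r / (2 * (t₁ + 1)) with hη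
  have hηpos : 0 < η := by positivity
  have hSegNear : ∀ p : E3 × E3, dist p (x₁, ω₁) < η →
      ∀ s ∈ Icc (0:ℝ) (t₁ - δ), p.1 - s • p.2 ∈ G := by
    intro p hp s hs
    have hd1 : dist p.1 x₁ < η := lt_of_le_of_lt (le_max_left _ _) (by rwa [Prod.dist_eq] at hp)
    have hd2 : dist p.2 ω₁ < η := lt_of_le_of_lt (le_max_right _ _) (by rwa [Prod.dist_eq] at hp)
    apply hrG
    rw [mem_thickening_iff]
    refine ⟨x₁ - s • ω₁, ⟨s, hs, rfl⟩, ?_⟩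
    have hst : s ≤ t₁ := by linarith [hs.2]
    have : (p.1 - s • p.2) - (x₁ - s • ω₁) = (p.1 - x₁) - s • (p.2 - ω₁) := by
      rw [smul_sub]; abel
    rw [dist_eq_norm, this]
    have hb : ‖(p.1 - x₁) - s • (p.2 - ω₁)‖ ≤ ‖p.1 - x₁‖ + s * ‖p.2 - ω₁‖ := by
      calc ‖(p.1 - x₁) - s • (p.2 - ω₁)‖ ≤ ‖p.1 - x₁‖ + ‖s • (p.2 - ω₁)‖ := norm_sub_le _ _
      _ = ‖p.1 - x₁‖ + |s| * ‖p.2 - ω₁‖ := by rw [norm_smul, Real.norm_eq_abs]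
      _ = ‖p.1 - x₁‖ + s * ‖p.2 - ω₁‖ := by rw [abs_of_nonneg hs.1]
    rw [dist_eq_norm] at hd1 hd2
    have hs2 : s * ‖p.2 - ω₁‖ ≤ t₁ * η := by
      apply mul_le_mul hst hd2.le (norm_nonneg _) ht₁
    have : ‖p.1 - x₁‖ + s * ‖p.2 - ω₁‖ < η + t₁ * η := by
      apply add_lt_add_of_lt_of_le hd1 hs2
    have hle : η + t₁ * η = (t₁ + 1) * η := by ring
    have : (t₁ + 1) * η = r / 2 := by
      rw [hη]; field_simp
    linarith [hb]
  -- membership in W for nearby parameters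
  have hWmem : ∀ p : E3 × E3, p ∈ ball (x₁, ω₁) ε → ∀ s ∈ Icc (t₁ - δ) (t₁ + δ),
      (p.1 - s • p.2 ∈ U ∧ fderiv ℝ f (p.1 - s • p.2) p.2 < 0) := by
    intro p hp s hs
    have : ((p, s) : (E3 × E3) × ℝ) ∈ W := by
      apply hball
      rw [mem_ball, Prod.dist_eq]
      apply max_lt (mem_ball.1 hp)
      rw [Real.dist_eq]
      have : |s - t₁| ≤ δ := abs_le.2 ⟨by linarith [hs.1], by linarith [hs.2]⟩
      linarith
    exact this
  -- the eventual statement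
  have hIoo : Ioo (t₁ - δ) (t₁ + δ) ∈ 𝓝 t₁ := isOpen_Ioo.mem_nhds ⟨by linarith, by linarith⟩
  have hτmem : ∀ᶠ p in 𝓝 (x₁, ω₁), τ p ∈ Ioo (t₁ - δ) (t₁ + δ) := by
    have := hτc.continuousAt.tendsto
    rw [hτ₁] at this
    exact this hIoo
  refine ⟨τ, hτc, hτ₁, ?_⟩
  filter_upwards [ball_mem_nhds _ hε, ball_mem_nhds _ hηpos, hτmem, hev] with p hball' hη' h3 h4 hpG
  set x := p.1 with hx
  set ω := p.2 with hω
  set t := τ p with htdef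
  have hWp : ∀ s ∈ Icc (t₁ - δ) (t₁ + δ), (x - s • ω ∈ U ∧ fderiv ℝ f (x - s • ω) ω < 0) :=
    hWmem p hball'
  have e1 : (ψ ((p, (0:ℝ)))).1 = p := congrArg Prod.fst h4
  have e2 : f (m (ψ (p, (0:ℝ)))) = 0 := congrArg Prod.snd h4
  have hfeq : f (x - t • ω) = 0 := by
    have hme : m (ψ (p, (0:ℝ))) = x - t • ω := by
      simp only [hm]
      rw [e1]
    rwa [hme] at e2
  set F : ℝ → ℝ := fun s => f (x - s • ω) with hF
  have hFd : ∀ s ∈ Icc (t₁ - δ) (t₁ + δ), HasDerivAt F (fderiv ℝ f (x - s • ω) (-ω)) s := by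
    intro s hs
    have hzU : x - s • ω ∈ U := (hWp s hs).1
    have hline : HasDerivAt (fun s : ℝ => x - s • ω) (-ω) s := by
      have h1 : HasDerivAt (fun s : ℝ => s • ω) ω s := by
        simpa using (hasDerivAt_id s).smul_const ω
      simpa using h1.const_sub x
    have hfz : HasFDerivAt f (fderiv ℝ f (x - s • ω)) (x - s • ω) :=
      ((hf.contDiffAt (hU.mem_nhds hzU)).differentiableAt one_ne_zero).hasFDerivAt
    exact hfz.comp_hasDerivAt s hline
  have hmono : StrictMonoOn F (Icc (t₁ - δ) (t₁ + δ)) := by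
    apply strictMonoOn_of_deriv_pos (convex_Icc _ _)
    · intro s hs
      exact (hFd s hs).continuousAt.continuousWithinAt
    · intro s hs
      rw [interior_Icc] at hs
      rw [(hFd s (Ioo_subset_Icc_self hs)).deriv]
      have := (hWp s (Ioo_subset_Icc_self hs)).2
      rw [map_neg]
      linarith
  have htI : t ∈ Icc (t₁ - δ) (t₁ + δ) := Ioo_subset_Icc_self h3
  have hFt : F t = 0 := hfeq
  have htpos : 0 < t := by
    rcases le_or_gt 0 (t₁ - δ) with h | h
    · linarith [h3.1]
    · have h0I : (0:ℝ) ∈ Icc (t₁ - δ) (t₁ + δ) := ⟨h.le, by linarith⟩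
      have hxU : x ∈ U := by simpa using (hWp 0 h0I).1
      have hfx : F 0 < 0 := by
        simp only [hF]
        simpa using (hloc x hxU).1 hpG
      by_contra hcon
      push_neg at hcon
      rcases eq_or_lt_of_le hcon with h' | h'
      · have : F 0 = 0 := h' ▸ hFt
        linarith
      · have := hmono htI h0I h'
        rw [hFt] at this
        linarith
  have hlower : ∀ s ∈ {s : ℝ | 0 < s ∧ x - s • ω ∉ G}, t ≤ s := by
    intro s hs
    by_contra hcon
    push_neg at hcon
    rcases le_or_gt s (t₁ - δ) with h | h
    · exact hs.2 (hSegNear p (mem_ball.1 hη') s ⟨hs.1.le, h⟩)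
    · have hsI : s ∈ Icc (t₁ - δ) (t₁ + δ) := ⟨h.le, by linarith [h3.2]⟩
      have hlt : F s < F t := hmono hsI htI hcon
      rw [hFt] at hlt
      exact hs.2 ((hloc _ (hWp s hsI).1).2 hlt)
  have hupper : ∀ ε' > (0:ℝ), ∃ s ∈ {s : ℝ | 0 < s ∧ x - s • ω ∉ G}, s < t + ε' := by
    intro ε' hε'
    refine ⟨min (t + ε'/2) ((t + (t₁ + δ))/2), ⟨?_, ?_⟩, ?_⟩
    · exact lt_trans htpos (lt_min (by linarith) (by linarith [h3.2]))
    · set s := min (t + ε'/2) ((t + (t₁ + δ))/2) with hs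
      have hts : t < s := lt_min (by linarith) (by linarith [h3.2])
      have hs2 : s < t₁ + δ := lt_of_le_of_lt (min_le_right _ _) (by linarith [h3.2])
      have hsI : s ∈ Icc (t₁ - δ) (t₁ + δ) := ⟨by linarith [h3.1], hs2.le⟩
      have hFs : 0 < F s := by
        have := hmono htI hsI hts
        rwa [hFt] at this
      intro hmem
      have := (hloc _ (hWp s hsI).1).1 hmem
      simp only [hF] at hFs
      linarith
    · exact lt_of_le_of_lt (min_le_left _ _) (by linarith)
  have hbdd : BddBelow {s : ℝ | 0 < s ∧ x - s • ω ∉ G} := ⟨0, fun v hv => hv.1.le⟩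
  obtain ⟨s₁, hs₁, _⟩ := hupper 1 one_pos
  apply le_antisymm
  · apply le_of_forall_pos_le_add
    intro ε' hε'
    obtain ⟨s, hsmem, hslt⟩ := hupper ε' hε'
    exact le_trans (csInf_le hbdd hsmem) hslt.le
  · exact le_csInf ⟨s₁, hs₁⟩ hlower

lemma escTime_translate (G : Set E3) (x₀ ω₀ : E3) (hω : ‖ω₀‖ = 1)
    (hA : {v : ℝ | 0 < v ∧ x₀ - v • ω₀ ∉ G}.Nonempty)
    (r : ℝ) (hr : 0 < r) (hballG : ∀ v : ℝ, |v| < r → x₀ - v • ω₀ ∈ G)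
    (s : ℝ) (hs : |s| < r) :
    escTime G (x₀ + s • ω₀) ω₀ = escTime G x₀ ω₀ + s := by
  have habs : ∀ v : ℝ, x₀ - v • ω₀ ∉ G → r ≤ |v| := by
    intro v hv
    by_contra h
    push_neg at h
    exact hv (hballG v h)
  have hset : {u : ℝ | 0 < u ∧ (x₀ + s • ω₀) - u • ω₀ ∉ G} =
      (fun v => v + s) '' {v : ℝ | 0 < v ∧ x₀ - v • ω₀ ∉ G} := by
    ext u
    have hrw : (x₀ + s • ω₀) - u • ω₀ = x₀ - (u - s) • ω₀ := by
      rw [sub_smul]; abel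
    simp only [mem_setOf_eq, mem_image, hrw]
    constructor
    · rintro ⟨hu, hnG⟩
      refine ⟨u - s, ⟨?_, hnG⟩, by ring⟩
      by_contra h
      push_neg at h
      have := habs _ hnG
      rw [abs_of_nonpos h] at this
      have hsr : s < r := lt_of_le_of_lt (le_abs_self s) hs
      linarith
    · rintro ⟨v, ⟨hv, hnG⟩, rfl⟩
      have hvr := habs _ hnG
      rw [abs_of_pos hv] at hvr
      have hsr : -r < s := neg_lt_of_abs_lt hs
      constructor
      · linarith
      · have : v + s - s = v := by ring
        rw [this]; exact hnG
  have hbdd : BddBelow {v : ℝ | 0 < v ∧ x₀ - v • ω₀ ∉ G} := ⟨0, fun v hv => hv.1.le⟩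
  rw [escTime, escTime, hset]
  have := (OrderIso.addRight s).map_csInf' hA hbdd
  simp only [OrderIso.addRight_apply] at this
  exact this.symm

/-- Let `(x₀,ω₀) ∈ G × S` be such that `y₀ := x₀ − t(x₀,ω₀)ω₀` is a
regular (C¹) point of `∂G` (expressed by a local C¹ defining function `f` on a
neighbourhood `U` of `y₀`, whose gradient at `y₀` is nonzero and points in the direction
of the outward unit normal `ν(y₀)`) and `ω₀·ν(y₀) < 0` (i.e. `⟪ω₀, ∇f(y₀)⟫ < 0`).
Then the escape time `t` is continuously differentiable on a neighbourhood of `(x₀,ω₀)`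
in `G × S`, one has `t(x,ω) → 0` as `(x,ω) → (y₀,ω₀)` within `G × S`, and
`ω₀·(∇ₓt)(x₀,ω₀) = 1`. -/
theorem escTime_contDiff_near_regular_point
    (G : Set E3) (hG : IsOpen G) (hGb : Bornology.IsBounded G)
    (x₀ ω₀ : E3) (hx₀ : x₀ ∈ G) (hω₀ : ω₀ ∈ sphS)
    (U : Set E3) (hU : IsOpen U) (hy₀U : x₀ - escTime G x₀ ω₀ • ω₀ ∈ U)
    (f : E3 → ℝ) (hf : ContDiffOn ℝ 1 f U)
    (hloc : ∀ z ∈ U, (z ∈ G ↔ f z < 0))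
    (hgrad : gradient f (x₀ - escTime G x₀ ω₀ • ω₀) ≠ 0)
    (htrans : ⟪ω₀, gradient f (x₀ - escTime G x₀ ω₀ • ω₀)⟫ < 0) :
    (∃ V : Set (E3 × E3), IsOpen V ∧ (x₀, ω₀) ∈ V ∧
      ContDiffOn ℝ 1 (fun p : E3 × E3 => escTime G p.1 p.2) (V ∩ G ×ˢ sphS)) ∧
    Tendsto (fun p : E3 × E3 => escTime G p.1 p.2)
      (𝓝[G ×ˢ sphS] (x₀ - escTime G x₀ ω₀ • ω₀, ω₀)) (𝓝 (0 : ℝ)) ∧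
    (∃ L : E3 →L[ℝ] ℝ, HasFDerivAt (fun x : E3 => escTime G x ω₀) L x₀ ∧ L ω₀ = 1) := by
  have hω₀n : ‖ω₀‖ = 1 := by simpa [sphS] using hω₀
  set t₀ := escTime G x₀ ω₀ with ht₀def
  set y₀ : E3 := x₀ - t₀ • ω₀ with hy₀def
  set A₀ : Set ℝ := {s : ℝ | 0 < s ∧ x₀ - s • ω₀ ∉ G} with hA₀def
  have hA₀bdd : BddBelow A₀ := ⟨0, fun v hv => hv.1.le⟩
  have hA₀ne : A₀.Nonempty := by
    obtain ⟨R, hR⟩ := hGb.subset_ball 0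
    refine ⟨‖x₀‖ + |R| + 1, ⟨by positivity, ?_⟩⟩
    intro hmem
    have h1 := hR hmem
    rw [mem_ball, dist_zero_right] at h1
    have h2 : ‖(‖x₀‖ + |R| + 1) • ω₀‖ - ‖x₀‖ ≤ ‖x₀ - (‖x₀‖ + |R| + 1) • ω₀‖ := by
      have := norm_sub_norm_le ((‖x₀‖ + |R| + 1) • ω₀) x₀
      rw [norm_sub_rev] at this
      linarith
    rw [norm_smul, Real.norm_eq_abs, hω₀n, mul_one] at h2
    have h3 : |‖x₀‖ + |R| + 1| = ‖x₀‖ + |R| + 1 := abs_of_pos (by positivity)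
    rw [h3] at h2
    have : R ≤ |R| := le_abs_self R
    linarith
  have ht₀0 : 0 ≤ t₀ := le_csInf hA₀ne (fun v hv => hv.1.le)
  have hseg₀ : ∀ s ∈ Ico (0:ℝ) t₀, x₀ - s • ω₀ ∈ G := by
    rintro s ⟨hs0, hst⟩
    rcases eq_or_lt_of_le hs0 with h | h
    · simpa [← h] using hx₀
    · by_contra hnG
      have : t₀ ≤ s := csInf_le hA₀bdd ⟨h, hnG⟩
      linarith
  have hy₀G : y₀ ∉ G := by
    intro hy₀Gmem
    have hopen : IsOpen {s : ℝ | x₀ - s • ω₀ ∈ G} :=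
      hG.preimage (continuous_const.sub (continuous_id.smul continuous_const))
    obtain ⟨δ', hδ', hball'⟩ := Metric.isOpen_iff.1 hopen t₀ hy₀Gmem
    have hlb : ∀ v ∈ A₀, t₀ + δ'/2 ≤ v := by
      intro v hv
      by_contra h
      push_neg at h
      rcases lt_or_ge v t₀ with h' | h'
      · exact hv.2 (hseg₀ v ⟨hv.1.le, h'⟩)
      · apply hv.2
        apply hball'
        rw [mem_ball, Real.dist_eq]
        rw [abs_of_nonneg (by linarith)]
        linarith
    have : t₀ + δ'/2 ≤ t₀ := le_csInf hA₀ne hlb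
    linarith
  have ht₀pos : 0 < t₀ := by
    rcases eq_or_lt_of_le ht₀0 with h | h
    · exfalso
      apply hy₀G
      rw [hy₀def, ← h]
      simpa using hx₀
    · exact h
  have hfy₀ : f y₀ = 0 := by
    have hge : 0 ≤ f y₀ := by
      by_contra h
      push_neg at h
      exact hy₀G ((hloc y₀ hy₀U).2 h)
    have hle : f y₀ ≤ 0 := by
      have h1 : Tendsto (fun s : ℝ => x₀ - s • ω₀) (𝓝[<] t₀) (𝓝 y₀) := by
        apply Tendsto.mono_left _ nhdsWithin_le_nhds
        exact ((continuous_const.sub (continuous_id.smul continuous_const)).tendsto t₀)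
      have hcf : ContinuousAt f y₀ := hf.continuousOn.continuousAt (hU.mem_nhds hy₀U)
      have htends : Tendsto (fun s : ℝ => f (x₀ - s • ω₀)) (𝓝[<] t₀) (𝓝 (f y₀)) :=
        hcf.tendsto.comp h1
      apply le_of_tendsto htends
      have hUev : ∀ᶠ s in 𝓝[<] t₀, x₀ - s • ω₀ ∈ U := h1 (hU.mem_nhds hy₀U)
      have hIoo : ∀ᶠ s in 𝓝[<] t₀, s ∈ Ioo (0:ℝ) t₀ :=
        Ioo_mem_nhdsLT ht₀pos
      filter_upwards [hUev, hIoo] with s hsU hsI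
      have : x₀ - s • ω₀ ∈ G := hseg₀ s ⟨hsI.1.le, hsI.2⟩
      exact ((hloc _ hsU).1 this).le
    linarith
  have htr₀ : fderiv ℝ f y₀ ω₀ < 0 := by
    have hgr : ⟪gradient f y₀, ω₀⟫ = fderiv ℝ f y₀ ω₀ := by
      rw [gradient]
      exact InnerProductSpace.toDual_symm_apply
    rw [real_inner_comm] at htrans
    rwa [hgr] at htrans
  -- apply the identification lemma at (x₀, ω₀)
  obtain ⟨τ, hτc, hτ₁, hev₁⟩ :=
    main_ident G hG U hU f hf hloc x₀ ω₀ t₀ ht₀0 hy₀U hfy₀ hseg₀ htr₀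
  have hGev : ∀ᶠ p in 𝓝 (x₀, ω₀), (p : E3 × E3).1 ∈ G :=
    (continuous_fst.tendsto (x₀, ω₀)).eventually (hG.eventually_mem hx₀)
  have hev₁' : ∀ᶠ p in 𝓝 (x₀, ω₀), escTime G (p : E3 × E3).1 p.2 = τ p := by
    filter_upwards [hev₁, hGev] with p h1 h2
    exact h1 h2
  -- apply the identification lemma at (y₀, ω₀)
  obtain ⟨τ₂, hτ₂c, hτ₂0, hev₂⟩ :=
    main_ident G hG U hU f hf hloc y₀ ω₀ 0 le_rfl (by simpa using hy₀U) (by simpa using hfy₀)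
      (by simp) (by simpa using htr₀)
  refine ⟨?_, ?_, ?_⟩
  · -- part 1
    obtain ⟨u, hu𝓝, hτu⟩ := hτc.contDiffOn le_rfl (by simp)
    obtain ⟨v, hv𝓝, hveq⟩ := eventually_iff_exists_mem.1 hev₁'
    obtain ⟨V, hVsub, hVopen, hVmem⟩ := _root_.mem_nhds_iff.1 (inter_mem hu𝓝 hv𝓝)
    refine ⟨V, hVopen, hVmem, ?_⟩
    apply ContDiffOn.congr (hτu.mono ?_)
    · intro p hp
      exact hveq p (hVsub hp.1).2
    · intro p hp
      exact (hVsub hp.1).1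
  · -- part 2
    have h2a : Tendsto τ₂ (𝓝[G ×ˢ sphS] (y₀, ω₀)) (𝓝 0) := by
      have := hτ₂c.continuousAt.tendsto
      rw [hτ₂0] at this
      exact this.mono_left nhdsWithin_le_nhds
    apply Tendsto.congr' _ h2a
    have hmemev : ∀ᶠ p in 𝓝[G ×ˢ sphS] (y₀, ω₀), (p : E3 × E3).1 ∈ G := by
      filter_upwards [self_mem_nhdsWithin] with p hp
      exact hp.1
    filter_upwards [hev₂.filter_mono nhdsWithin_le_nhds, hmemev] with p h1 h2
    exact (h1 h2).symm
  · -- part 3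
    have hdiff : DifferentiableAt ℝ τ (x₀, ω₀) := hτc.differentiableAt one_ne_zero
    set Dτ := fderiv ℝ τ (x₀, ω₀) with hDτ
    have hDτ' : HasFDerivAt τ Dτ (x₀, ω₀) := hdiff.hasFDerivAt
    have hline : HasFDerivAt (fun x : E3 => ((x, ω₀) : E3 × E3))
        (ContinuousLinearMap.inl ℝ E3 E3) x₀ :=
      (hasFDerivAt_id x₀).prodMk (hasFDerivAt_const _ _)
    have hcomp : HasFDerivAt (fun x : E3 => τ (x, ω₀))
        (Dτ.comp (ContinuousLinearMap.inl ℝ E3 E3)) x₀ := hDτ'.comp x₀ hline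
    have heq : (fun x : E3 => escTime G x ω₀) =ᶠ[𝓝 x₀] (fun x : E3 => τ (x, ω₀)) := by
      have htend : Tendsto (fun x : E3 => ((x, ω₀) : E3 × E3)) (𝓝 x₀) (𝓝 (x₀, ω₀)) :=
        (continuous_id.prodMk continuous_const).tendsto x₀
      filter_upwards [htend.eventually hev₁'] with x hx
      exact hx
    refine ⟨Dτ.comp (ContinuousLinearMap.inl ℝ E3 E3), hcomp.congr_of_eventuallyEq heq, ?_⟩
    -- directional derivative equals 1 via translation invariance
    obtain ⟨r, hrpos, hrball⟩ := Metric.isOpen_iff.1 hG x₀ hx₀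
    have hballG : ∀ v : ℝ, |v| < r → x₀ - v • ω₀ ∈ G := by
      intro v hv
      apply hrball
      rw [mem_ball, dist_eq_norm]
      simp only [sub_sub_cancel_left, norm_neg]
      rw [norm_smul, Real.norm_eq_abs, hω₀n, mul_one]
      exact hv
    have htransl : ∀ s : ℝ, |s| < r → escTime G (x₀ + s • ω₀) ω₀ = t₀ + s := by
      intro s hs
      rw [escTime_translate G x₀ ω₀ hω₀n hA₀ne r hrpos hballG s hs]
    have hL : HasFDerivAt (fun x : E3 => escTime G x ω₀)
        (Dτ.comp (ContinuousLinearMap.inl ℝ E3 E3)) x₀ := hcomp.congr_of_eventuallyEq heq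
    have hcurve : HasDerivAt (fun s : ℝ => x₀ + s • ω₀) ω₀ 0 := by
      have h1 : HasDerivAt (fun s : ℝ => s • ω₀) ω₀ 0 := by
        simpa using (hasDerivAt_id (0:ℝ)).smul_const ω₀
      simpa using h1.const_add x₀
    have hd1 : HasDerivAt (fun s : ℝ => escTime G (x₀ + s • ω₀) ω₀)
        ((Dτ.comp (ContinuousLinearMap.inl ℝ E3 E3)) ω₀) 0 := by
      have hL' : HasFDerivAt (fun x : E3 => escTime G x ω₀)
          (Dτ.comp (ContinuousLinearMap.inl ℝ E3 E3)) (x₀ + (0:ℝ) • ω₀) := by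
        simpa using hL
      exact hL'.comp_hasDerivAt 0 hcurve
    have hd2 : HasDerivAt (fun s : ℝ => escTime G (x₀ + s • ω₀) ω₀) 1 0 := by
      have hd2' : HasDerivAt (fun s : ℝ => t₀ + s) 1 0 := by
        simpa using (hasDerivAt_id (0:ℝ)).const_add t₀
      apply hd2'.congr_of_eventuallyEq
      have hev : ∀ᶠ s : ℝ in 𝓝 0, |s| < r := by
        have := Metric.ball_mem_nhds (0:ℝ) hrpos
        filter_upwards [this] with s hs
        simpa [Real.dist_eq] using hs
      filter_upwards [hev] with s hs
      exact htransl s hs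
    exact hd1.unique hd2
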